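/- If d ≥ 4 and (ν₁,…,ν_{d-1}) satisfies Noether's equations, is irreducible in Hudson's sense, and is not de Jonquières, then the dimension 8 + 2∑ νᵢ of the corresponding component of Bir°_d is at most 2d + 12, which is strictly less than 4d + 6 for d ≥ 4. -/

import Mathlib

/-- The multiset of multiplicities associated to a multi-index `ν` in degree `d`:
the multiplicity `i` appears `ν i` times, for `1 ≤ i ≤ d - 1`. -/
def multisetOf (d : ℕ) (ν : ℕ → ℕ) : Multiset ℕ :=
  (Finset.Icc 1 (d - 1)).val.bind fun i => Multiset.replicate (ν i) i

/-- The three largest elements of a multiset of natural numbers. -/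
def topThree (M : Multiset ℕ) : ℕ × ℕ × ℕ :=
  let l := (M.sort (· ≤ ·)).reverse
  (l.headI, l.tail.headI, l.tail.tail.headI)

/-- Hudson's reduction step. -/
def hudsonStep (d : ℕ) (M : Multiset ℕ) : ℕ × Multiset ℕ :=
  match topThree M with
  | (m1, m2, m3) =>
    (2 * d - (m1 + m2 + m3),
      Multiset.filter (fun x => 0 < x)
        ((d - m2 - m3) ::ₘ (d - m1 - m3) ::ₘ (d - m1 - m2) ::ₘ
          ((M.erase m1).erase m2).erase m3))

/-- Hudson's irreducibility test (with fuel). -/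
def hudsonIrredAux : ℕ → ℕ → Multiset ℕ → Prop
  | 0, _, _ => True
  | fuel + 1, d, M =>
    if d ≤ 2 then True
    else
      match topThree M with
      | (m1, m2, _) =>
        m1 + m2 ≤ d ∧ hudsonIrredAux fuel (hudsonStep d M).1 (hudsonStep d M).2

/-- A multi-index `ν` in degree `d` is irreducible in Hudson's sense. -/
def HudsonIrreducible (d : ℕ) (ν : ℕ → ℕ) : Prop :=
  hudsonIrredAux d d (multisetOf d ν)

private lemma key_ineq (a b c d : ℤ) (hc : 1 ≤ c) (hcb : c ≤ b) (hba : b ≤ a)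
    (hab : a + b ≤ d) (ha2 : a + 2 ≤ d) :
    a*a + b*b + 2*c*d + 3*d ≤ (c+1)*(a+b) + 4*c + 1 + d*d := by
  have hp : (0:ℤ) ≤ d - a - b := by linarith
  have hs : (0:ℤ) ≤ b - c := by linarith
  have hu : (0:ℤ) ≤ c - 1 := by linarith
  have hv : (0:ℤ) ≤ a - b := by linarith
  have hw : (0:ℤ) ≤ d - a - 2 := by linarith
  nlinarith [mul_nonneg hw hp, mul_nonneg hw hs, mul_nonneg hw hv,
    mul_nonneg hp hs, mul_nonneg hp hu, mul_nonneg hp hv, mul_nonneg hs hv]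

private lemma key (a b c d T Q L : ℤ) (hc : 1 ≤ c) (hcb : c ≤ b) (hba : b ≤ a)
    (hab : a + b ≤ d) (ha2 : a + 2 ≤ d) (hsum : a + b + T = 3*(d-1))
    (hsq : a*a + b*b + Q = d*d - 1) (hL : d + 1 ≤ L)
    (hmain : Q + c * L ≤ (c+1) * T) : False := by
  have h1 : c * (d+1) ≤ c * L := by
    apply mul_le_mul_of_nonneg_left hL; linarith
  have h2 := key_ineq a b c d hc hcb hba hab ha2
  nlinarith

private lemma per_elem (c x : ℕ) (h1 : 1 ≤ x) (h2 : x ≤ c) : x * x + c ≤ (c + 1) * x := by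
  zify at *
  nlinarith [mul_nonneg (by linarith : (0:ℤ) ≤ (x:ℤ) - 1) (by linarith : (0:ℤ) ≤ (c:ℤ) - x)]

private lemma list_bound (c : ℕ) : ∀ (t : List ℕ), (∀ x ∈ t, 1 ≤ x ∧ x ≤ c) →
    (t.map (fun x => x * x)).sum + c * t.length ≤ (c + 1) * t.sum
  | [], _ => by simp
  | x :: t, h => by
    have hx := h x (by simp)
    have ih := list_bound c t (fun y hy => h y (by simp [hy]))
    have hpe := per_elem c x hx.1 hx.2
    simp only [List.map_cons, List.sum_cons, List.length_cons]
    calc x * x + (t.map (fun x => x * x)).sum + c * (t.length + 1)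
        = (x * x + c) + ((t.map (fun x => x * x)).sum + c * t.length) := by ring
      _ ≤ (c + 1) * x + (c + 1) * t.sum := Nat.add_le_add hpe ih
      _ = (c + 1) * (x + t.sum) := by ring

private lemma sum_le_sumsq : ∀ (t : List ℕ), (∀ x ∈ t, 1 ≤ x) →
    t.sum ≤ (t.map (fun x => x * x)).sum
  | [], _ => by simp
  | x :: t, h => by
    have hx := h x (by simp)
    have ih := sum_le_sumsq t (fun y hy => h y (by simp [hy]))
    simp only [List.map_cons, List.sum_cons]
    have : x ≤ x * x := Nat.le_mul_of_pos_left x hx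
    omega

private lemma all_one : ∀ (t : List ℕ), (∀ x ∈ t, 1 ≤ x) →
    ((t.map (fun x => x * x)).sum = t.sum) → ∀ x ∈ t, x = 1
  | [], _, _ => by simp
  | x :: t, h, heq => by
    have hx := h x (by simp)
    have ih := sum_le_sumsq t (fun y hy => h y (by simp [hy]))
    have hxx : x ≤ x * x := Nat.le_mul_of_pos_left x hx
    simp only [List.map_cons, List.sum_cons] at heq
    have hx2 : x * x = x := by omega
    have hteq : (t.map (fun x => x * x)).sum = t.sum := by omega
    have hx1 : x = 1 := by nlinarith
    intro y hy
    rcases List.mem_cons.1 hy with rfl | hy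
    · exact hx1
    · exact all_one t (fun y hy => h y (by simp [hy])) hteq y hy

private lemma noether (fuel d : ℕ) (M : Multiset ℕ) (hd : 2 < d)
    (h : hudsonIrredAux (fuel + 1) d M) : (topThree M).1 + (topThree M).2.1 ≤ d := by
  rw [hudsonIrredAux, if_neg (by omega)] at h
  rcases htt : topThree M with ⟨m1, m2, m3⟩
  rw [htt] at h
  exact h.1

private lemma card_mof (d : ℕ) (ν : ℕ → ℕ) :
    Multiset.card (multisetOf d ν) = ∑ i ∈ Finset.Icc 1 (d - 1), ν i := by
  rw [Finset.sum_eq_multiset_sum]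
  simp [multisetOf, Multiset.card_bind, Function.comp_def]

private lemma sum_mof (d : ℕ) (ν : ℕ → ℕ) :
    (multisetOf d ν).sum = ∑ i ∈ Finset.Icc 1 (d - 1), i * ν i := by
  rw [Finset.sum_eq_multiset_sum]
  simp [multisetOf, Multiset.sum_bind, Multiset.sum_replicate, mul_comm]

private lemma sumsq_mof (d : ℕ) (ν : ℕ → ℕ) :
    ((multisetOf d ν).map (fun x => x * x)).sum = ∑ i ∈ Finset.Icc 1 (d - 1), i ^ 2 * ν i := by
  rw [Finset.sum_eq_multiset_sum]
  simp only [multisetOf, Multiset.map_bind, Multiset.map_replicate]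
  simp [Multiset.sum_bind, Multiset.sum_replicate, mul_comm, pow_two, mul_assoc]

private lemma mem_mof (d : ℕ) (ν : ℕ → ℕ) (x : ℕ) (hx : x ∈ multisetOf d ν) :
    1 ≤ x ∧ x ≤ d - 1 := by
  rw [multisetOf, Multiset.mem_bind] at hx
  obtain ⟨i, hi, hxi⟩ := hx
  rw [Multiset.eq_of_mem_replicate hxi]
  simpa using Finset.mem_Icc.1 hi

private lemma count_mof (d : ℕ) (ν : ℕ → ℕ) (j : ℕ) (h1 : 1 ≤ j) (h2 : j ≤ d - 1) :
    Multiset.count j (multisetOf d ν) = ν j := by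
  rw [multisetOf, Multiset.count_bind]
  have : ∀ i ∈ Finset.Icc 1 (d-1), Multiset.count j (Multiset.replicate (ν i) i)
      = if i = j then ν i else 0 := fun i _ => Multiset.count_replicate j i (ν i)
  calc ((Finset.Icc 1 (d-1)).val.map fun i => Multiset.count j (Multiset.replicate (ν i) i)).sum
      = ∑ i ∈ Finset.Icc 1 (d-1), if i = j then ν i else 0 := Finset.sum_congr rfl this
    _ = ν j := by rw [Finset.sum_ite_eq' (Finset.Icc 1 (d-1)) j ν, if_pos (Finset.mem_Icc.2 ⟨h1, h2⟩)]

theorem stmt_18 (d : ℕ) (hd : 4 ≤ d) (ν : ℕ → ℕ)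
    (h1 : ∑ i ∈ Finset.Icc 1 (d - 1), i ^ 2 * ν i = d ^ 2 - 1)
    (h2 : ∑ i ∈ Finset.Icc 1 (d - 1), i * ν i = 3 * (d - 1))
    (hirr : HudsonIrreducible d ν)
    (hnotdJ : ¬ (ν 1 = 2 * d - 2 ∧ ν (d - 1) = 1 ∧ ∀ i, 2 ≤ i → i ≤ d - 2 → ν i = 0)) :
    8 + 2 * ∑ i ∈ Finset.Icc 1 (d - 1), ν i ≤ 2 * d + 12 ∧ 2 * d + 12 < 4 * d + 6 := by
  refine ⟨?_, by omega⟩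
  suffices hN : ∑ i ∈ Finset.Icc 1 (d - 1), ν i ≤ d + 2 by omega
  by_contra hcon
  push_neg at hcon
  set M := multisetOf d ν with hMdef
  set N := ∑ i ∈ Finset.Icc 1 (d - 1), ν i with hNdef
  have hcard : Multiset.card M = N := card_mof d ν
  have hsum : M.sum = 3 * (d - 1) := by rw [hMdef, sum_mof]; exact h2
  have hsq : (M.map (fun x => x * x)).sum = d ^ 2 - 1 := by rw [hMdef, sumsq_mof]; exact h1
  have hlen : ((M.sort (· ≤ ·)).reverse).length = N := by
    rw [List.length_reverse, Multiset.length_sort, hcard]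
  obtain ⟨a, b, c, r, hLr⟩ : ∃ a b c r, (M.sort (· ≤ ·)).reverse = a :: b :: c :: r := by
    rcases hE : (M.sort (· ≤ ·)).reverse with _ | ⟨a, _ | ⟨b, _ | ⟨c, r⟩⟩⟩
    · rw [hE] at hlen; simp at hlen; omega
    · rw [hE] at hlen; simp at hlen; omega
    · rw [hE] at hlen; simp at hlen; omega
    · exact ⟨a, b, c, r, rfl⟩
  have hperm : ((a :: b :: c :: r : List ℕ) : Multiset ℕ) = M := by
    rw [← hLr, Multiset.coe_reverse, Multiset.sort_eq]
  have hmemL : ∀ x ∈ (a :: b :: c :: r : List ℕ), 1 ≤ x ∧ x ≤ d - 1 := by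
    intro x hx
    exact mem_mof d ν x (by rw [← hMdef, ← hperm]; exact_mod_cast hx)
  have hsorted : (a :: b :: c :: r).Pairwise (fun x y => y ≤ x) := by
    rw [← hLr]
    exact List.pairwise_reverse.mpr (Multiset.pairwise_sort (r := (· ≤ ·)) (s := M))
  have hba : b ≤ a := (List.pairwise_cons.1 hsorted).1 b (by simp)
  have hcb : c ≤ b :=
    (List.pairwise_cons.1 (List.pairwise_cons.1 hsorted).2).1 c (by simp)
  have hrc : ∀ x ∈ r, x ≤ c :=
    (List.pairwise_cons.1 (List.pairwise_cons.1 (List.pairwise_cons.1 hsorted).2).2).1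
  have htop : topThree M = (a, b, c) := by
    unfold topThree
    rw [hLr]
    rfl
  have hab : a + b ≤ d := by
    have h' : hudsonIrredAux (d - 1 + 1) d M := by
      rw [show d - 1 + 1 = d from by omega]; exact hirr
    have := noether (d - 1) d M (by omega) h'
    rw [htop] at this
    exact this
  have hLsum : a + (b + (c + r.sum)) = 3 * (d - 1) := by
    have h' : ((a :: b :: c :: r : List ℕ) : Multiset ℕ).sum = 3 * (d - 1) := by
      rw [hperm]; exact hsum
    simpa using h'
  have hQ : a * a + (b * b + (c * c + (r.map (fun x => x * x)).sum)) = d ^ 2 - 1 := by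
    have h' : (((a :: b :: c :: r : List ℕ) : Multiset ℕ).map (fun x => x * x)).sum
        = d ^ 2 - 1 := by rw [hperm]; exact hsq
    simpa using h'
  have hlen3 : N = 3 + r.length := by rw [← hlen, hLr]; simp; omega
  have hsqd : d ^ 2 = d * d := sq d
  have ha1 : a ≤ d - 1 := (hmemL a (by simp)).2
  -- a ≤ d - 2
  have ha2 : a + 2 ≤ d := by
    by_contra hc2
    have ha : a = d - 1 := by omega
    obtain ⟨e, he⟩ : ∃ e, d = e + 1 := ⟨d - 1, by omega⟩
    have he3 : 3 ≤ e := by omega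
    have hsqd1 : d ^ 2 - 1 = e * e + 2 * e := by
      have : d ^ 2 = e * e + 2 * e + 1 := by rw [he]; ring
      omega
    have hae : a = e := by omega
    have hd1e : d - 1 = e := by omega
    have htailsum : b + (c + r.sum) = 2 * e := by
      rw [hae, hd1e] at hLsum; omega
    have htailsq : b * b + (c * c + (r.map (fun x => x * x)).sum) = 2 * e := by
      rw [hae, hsqd1] at hQ; omega
    have hall : ∀ x ∈ (b :: c :: r : List ℕ), x = 1 := by
      apply all_one
      · intro x hx; exact (hmemL x (by simp at hx ⊢; tauto)).1
      · simp only [List.map_cons, List.sum_cons]; omega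
    have hcount1 : Multiset.count (d - 1) M = 1 := by
      rw [← hperm, Multiset.coe_count]
      have h0 : List.count (d - 1) (b :: c :: r) = 0 :=
        List.count_eq_zero.2 (fun hmem => by have := hall _ hmem; omega)
      rw [ha, List.count_cons_self, h0]
    have hcountlen : List.count 1 (b :: c :: r) = (b :: c :: r).length :=
      List.count_eq_length.2 (fun x hx => (hall x hx).symm)
    have hlen2 : (b :: c :: r).length = 2 * e := by
      have hrepl := List.eq_replicate_of_mem hall
      have hsum1 : (b :: c :: r).sum = (b :: c :: r).length := by
        calc (b :: c :: r).sum = (List.replicate (b :: c :: r).length 1).sum := by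
              rw [← hrepl]
          _ = (b :: c :: r).length := by simp
      simp only [List.sum_cons, List.length_cons] at hsum1 ⊢
      omega
    have hcount2 : Multiset.count 1 M = 2 * d - 2 := by
      rw [← hperm, Multiset.coe_count]
      have hane : (1 : ℕ) ≠ a := by omega
      rw [List.count_cons_of_ne hane.symm, hcountlen, hlen2]
      omega
    have hcount3 : ∀ i, 2 ≤ i → i ≤ d - 2 → Multiset.count i M = 0 := by
      intro i hi2 hid
      rw [← hperm, Multiset.coe_count]
      apply List.count_eq_zero.2
      intro hmem
      rcases List.mem_cons.1 hmem with rfl | hmem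
      · omega
      · have := hall _ hmem; omega
    have hv1 := count_mof d ν 1 le_rfl (by omega)
    have hvd := count_mof d ν (d - 1) (by omega) le_rfl
    rw [← hMdef] at hv1 hvd
    refine hnotdJ ⟨by omega, by omega, fun i hi2 hid => ?_⟩
    have hvi := count_mof d ν i (by omega) (by omega)
    rw [← hMdef] at hvi
    rw [← hvi]
    exact hcount3 i hi2 hid
  -- final contradiction
  have hc1 : 1 ≤ c := (hmemL c (by simp)).1
  have hmemt : ∀ x ∈ (c :: r : List ℕ), 1 ≤ x ∧ x ≤ c := by
    intro x hx
    rcases List.mem_cons.1 hx with rfl | hx'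
    · exact ⟨hc1, le_rfl⟩
    · exact ⟨(hmemL x (by simp [hx'])).1, hrc x hx'⟩
  have hbound := list_bound c (c :: r) hmemt
  simp only [List.map_cons, List.sum_cons, List.length_cons] at hbound
  have hT3 : a + b + (c + r.sum) + 3 = 3 * d := by omega
  have hdd : 0 < d * d := Nat.mul_pos (by omega) (by omega)
  have hQ4 : a * a + (b * b + (c * c + (r.map (fun x => x * x)).sum)) + 1 = d * d := by
    rw [hsqd] at hQ; omega
  have hmain : (c * c + (r.map (fun x => x * x)).sum) + c * (1 + r.length)
      ≤ (c + 1) * (c + r.sum) := by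
    calc (c * c + (r.map (fun x => x * x)).sum) + c * (1 + r.length)
        = c * c + (r.map (fun x => x * x)).sum + c * (r.length + 1) := by ring
      _ ≤ (c + 1) * (c + r.sum) := hbound
  apply key (a : ℤ) (b : ℤ) (c : ℤ) (d : ℤ)
      ((c + r.sum : ℕ) : ℤ) ((c * c + (r.map (fun x => x * x)).sum : ℕ) : ℤ)
      ((1 + r.length : ℕ) : ℤ) (by exact_mod_cast hc1) (by exact_mod_cast hcb)
      (by exact_mod_cast hba) (by exact_mod_cast hab) (by exact_mod_cast ha2)
  · have h' := hT3
    zify at h'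
    push_cast at h' ⊢
    linarith
  · have h' := hQ4
    zify at h'
    push_cast at h' ⊢
    linarith
  · have hLL : d + 1 ≤ 1 + r.length := by omega
    exact_mod_cast hLL
  · exact_mod_cast hmain
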